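/- If a language L accepted by a DFA with n states is not prefix-free, then there exists a witness (v, w) with v a proper prefix of w, v ∈ L, w ∈ L, and |w| ≤ 2n − 1. -/

import Mathlib

def PrefixFree {α : Type*} (L : Set (List α)) : Prop :=
  ∀ v ∈ L, ∀ w ∈ L, v <+: w → v = w

lemma key_lemma {α σ : Type*} [Fintype σ] (M : DFA α σ) :
    ∀ k (v w : List α), w.length ≤ k → v <+: w → v ≠ w → v ∈ M.accepts → w ∈ M.accepts →
      ∃ v' w' : List α, v' <+: w' ∧ v' ≠ w' ∧ v' ∈ M.accepts ∧ w' ∈ M.accepts ∧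
        w'.length ≤ 2 * Fintype.card σ - 1 := by
  intro k
  induction k with
  | zero =>
    intro v w hw hpre hne hv hww
    have hw0 : w = [] := List.length_eq_zero_iff.mp (Nat.le_zero.mp hw)
    subst hw0
    exact absurd (List.prefix_nil.mp hpre) hne
  | succ k ih =>
    intro v w hw hpre hne hv hww
    set n := Fintype.card σ with hn
    by_cases hshort : w.length ≤ 2 * n - 1
    · exact ⟨v, w, hpre, hne, hv, hww, hshort⟩
    · push_neg at hshort
      have hcard : 1 ≤ n := Fintype.card_pos_iff.mpr ⟨M.start⟩
      have hwlen : 2 * n ≤ w.length := by omega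
      obtain ⟨u, rfl⟩ := hpre
      have hu : u ≠ [] := by rintro rfl; simp at hne
      have hu1 : 1 ≤ u.length := List.length_pos_iff.mpr hu
      have hwl : (v ++ u).length = v.length + u.length := by simp
      by_cases hv_len : n ≤ v.length
      · -- pump down inside v
        obtain ⟨q, a, b, c, hsplit, _, hb, ha, hbq, hc⟩ :=
          M.evalFrom_split (s := M.start) (t := M.eval v) hv_len rfl
        have hvac : M.eval (a ++ c) = M.eval v := by
          rw [DFA.eval, DFA.evalFrom_of_append, ha, hc]; rfl
        have hacu : M.eval (a ++ c ++ u) = M.eval (v ++ u) := by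
          rw [DFA.eval, DFA.evalFrom_of_append, DFA.evalFrom_of_append, ha, hc,
            M.evalFrom_of_append M.start v u]
          rfl
        have hvl : v.length = a.length + b.length + c.length := by
          rw [hsplit]; simp; omega
        have hb1 : 1 ≤ b.length := List.length_pos_iff.mpr hb
        have hlen : (a ++ c ++ u).length ≤ k := by
          simp only [List.length_append] at *
          omega
        refine ih (a ++ c) (a ++ c ++ u) hlen ⟨u, rfl⟩ ?_ ?_ ?_
        · intro heq
          have h' := congrArg List.length heq
          simp only [List.length_append] at h'
          exact hu (List.length_eq_zero_iff.mp (by omega))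
        · rw [DFA.mem_accepts, hvac]; exact hv
        · rw [DFA.mem_accepts, hacu]; exact hww
      · -- pump down inside u
        push_neg at hv_len
        have hulen : n ≤ u.length := by omega
        obtain ⟨q, a, b, c, hsplit, hab, hb, ha, hbq, hc⟩ :=
          M.evalFrom_split (s := M.eval v) (t := M.eval (v ++ u)) hulen
            (by rw [DFA.eval, DFA.evalFrom_of_append])
        have hceq : M.eval (v ++ (a ++ c)) = M.eval (v ++ u) := by
          rw [DFA.eval, DFA.evalFrom_of_append, DFA.evalFrom_of_append,
            show M.evalFrom M.start v = M.eval v from rfl, ha, hc]; rfl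
        have hul : u.length = a.length + b.length + c.length := by
          rw [hsplit]; simp; omega
        have hb1 : 1 ≤ b.length := List.length_pos_iff.mpr hb
        have hc_ne : 1 ≤ c.length := by
          simp only [List.length_append] at *
          omega
        have hlen : (v ++ (a ++ c)).length ≤ k := by
          simp only [List.length_append] at *
          omega
        refine ih v (v ++ (a ++ c)) hlen ⟨a ++ c, rfl⟩ ?_ hv ?_
        · intro heq
          have h' := congrArg List.length heq
          simp only [List.length_append] at h'
          omega
        · rw [DFA.mem_accepts, hceq]; exact hww

theorem nonPrefixFree_short_witness {α σ : Type*} [Fintype σ] (M : DFA α σ) (n : ℕ)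
    (hn : Fintype.card σ = n) (h : ¬ PrefixFree M.accepts) :
    ∃ v w : List α, v <+: w ∧ v ≠ w ∧ v ∈ M.accepts ∧ w ∈ M.accepts ∧
      w.length ≤ 2 * n - 1 := by
  unfold PrefixFree at h
  push_neg at h
  obtain ⟨v, hv, w, hw, hpre, hne⟩ := h
  obtain ⟨v', w', h1, h2, h3, h4, h5⟩ := key_lemma M w.length v w le_rfl hpre hne hv hw
  exact ⟨v', w', h1, h2, h3, h4, by rwa [hn] at h5⟩
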